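/- For velocity vectors u, v in the open unit ball of ℝ³, define Einstein addition u ⊕ v := (1/(1 + u·v)) · (u + v‖ + √(1-‖u‖²) · v⊥), where v‖ is the component of v parallel to u and v⊥ the orthogonal component. Then the gamma factors satisfy γ(u ⊕ v) = γ(u) · γ(v) · (1 + u·v), where γ(w) := 1/√(1-‖w‖²). -/

import Mathlib

open scoped RealInnerProductSpace Classical

noncomputable def eAdd (u v : EuclideanSpace ℝ (Fin 3)) : EuclideanSpace ℝ (Fin 3) :=
  if u = 0 then v else
    (1 + ⟪u, v⟫)⁻¹ •
      (u + (⟪u, v⟫ / ‖u‖ ^ 2) • u +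
        Real.sqrt (1 - ‖u‖ ^ 2) • (v - (⟪u, v⟫ / ‖u‖ ^ 2) • u))

noncomputable def egamma (w : EuclideanSpace ℝ (Fin 3)) : ℝ :=
  (Real.sqrt (1 - ‖w‖ ^ 2))⁻¹

/-- Gamma factor identity for Einstein velocity addition. -/
theorem einstein_gamma_identity (u v : EuclideanSpace ℝ (Fin 3))
    (hu : ‖u‖ < 1) (hv : ‖v‖ < 1) :
    egamma (eAdd u v) = egamma u * egamma v * (1 + ⟪u, v⟫) := by
  by_cases hu0 : u = 0
  · subst hu0
    simp [eAdd, egamma]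
  · have hU : ‖u‖ ^ 2 < 1 := by nlinarith [norm_nonneg u]
    have hV : ‖v‖ ^ 2 < 1 := by nlinarith [norm_nonneg v]
    have hU0 : (0:ℝ) < ‖u‖ ^ 2 := pow_pos (norm_pos_iff.mpr hu0) 2
    have habs : |⟪u, v⟫| ≤ ‖u‖ * ‖v‖ := abs_real_inner_le_norm u v
    have ha : (0:ℝ) < 1 + ⟪u, v⟫ := by
      have h1 : ‖u‖ * ‖v‖ < 1 := by nlinarith [norm_nonneg u, norm_nonneg v]
      have := (abs_le.mp habs).1
      linarith
    obtain ⟨a, hadef⟩ : ∃ a : ℝ, a = ⟪u, v⟫ := ⟨_, rfl⟩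
    have ha' : (0:ℝ) < 1 + a := by rw [hadef]; exact ha
    have ha'' : (1:ℝ) + a ≠ 0 := ne_of_gt ha'
    set s : ℝ := Real.sqrt (1 - ‖u‖ ^ 2) with hsdef
    have hs2 : s ^ 2 = 1 - ‖u‖ ^ 2 := Real.sq_sqrt (by linarith)
    set w : EuclideanSpace ℝ (Fin 3) :=
      u + (⟪u, v⟫ / ‖u‖ ^ 2) • u + s • (v - (⟪u, v⟫ / ‖u‖ ^ 2) • u) with hwdef
    have hin : ⟪w, w⟫ = (1 + ⟪u, v⟫) ^ 2 - (1 - ‖u‖ ^ 2) * (1 - ‖v‖ ^ 2) := by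
      rw [hwdef]
      simp only [inner_add_left, inner_add_right, inner_sub_left, inner_sub_right,
        real_inner_smul_left, real_inner_smul_right, real_inner_comm v u]
      have hadef2 : a = ⟪v, u⟫ := by rw [hadef, real_inner_comm]
      rw [real_inner_self_eq_norm_sq, real_inner_self_eq_norm_sq, ← hadef2]
      field_simp
      ring_nf
      linear_combination (‖u‖ ^ 2 * ‖v‖ ^ 2 - a ^ 2) * hs2
    have key : 1 - ‖eAdd u v‖ ^ 2
        = (1 - ‖u‖ ^ 2) * (1 - ‖v‖ ^ 2) / (1 + ⟪u, v⟫) ^ 2 := by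
      have hw : eAdd u v = (1 + ⟪u, v⟫)⁻¹ • w := by rw [eAdd, if_neg hu0]
      rw [hw, norm_smul, mul_pow, ← real_inner_self_eq_norm_sq w, hin, Real.norm_eq_abs, sq_abs, ← hadef]
      field_simp
      ring
    have hA : (0:ℝ) < 1 - ‖u‖ ^ 2 := by linarith
    have hB : (0:ℝ) < 1 - ‖v‖ ^ 2 := by linarith
    have h1 : Real.sqrt ((1 - ‖u‖ ^ 2) * (1 - ‖v‖ ^ 2) / (1 + ⟪u, v⟫) ^ 2)
        = Real.sqrt (1 - ‖u‖ ^ 2) * Real.sqrt (1 - ‖v‖ ^ 2) / (1 + ⟪u, v⟫) := by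
      rw [show (1 - ‖u‖ ^ 2) * (1 - ‖v‖ ^ 2) / (1 + ⟪u, v⟫) ^ 2
            = (Real.sqrt (1 - ‖u‖ ^ 2) * Real.sqrt (1 - ‖v‖ ^ 2) / (1 + ⟪u, v⟫)) ^ 2 by
          rw [div_pow, mul_pow, ← hsdef, hs2, Real.sq_sqrt hB.le]]
      exact Real.sqrt_sq (by positivity)
    unfold egamma
    rw [key, h1]
    have hsa : 0 < Real.sqrt (1 - ‖u‖ ^ 2) := Real.sqrt_pos.mpr hA
    have hsb : 0 < Real.sqrt (1 - ‖v‖ ^ 2) := Real.sqrt_pos.mpr hB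
    field_simp
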